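/- arXiv:2207.08507 — 2 statements merged into one kernel-verified Lean document; each statement's English description precedes it below -/
import Mathlib

section
/- The group Sym(Γ) of all symmetries of the tournament Γ has order exactly 1053. -/
set_option maxHeartbeats 4000000
set_option maxRecDepth 40000

def K27 : Type := ZMod 3 × ZMod 3 × ZMod 3

namespace K27

instance : DecidableEq K27 := inferInstanceAs (DecidableEq (ZMod 3 × ZMod 3 × ZMod 3))
instance : Fintype K27 := inferInstanceAs (Fintype (ZMod 3 × ZMod 3 × ZMod 3))

def mk (a b c : ZMod 3) : K27 := (a, b, c)
def c1 (u : K27) : ZMod 3 := u.1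
def c2 (u : K27) : ZMod 3 := u.2.1
def c3 (u : K27) : ZMod 3 := u.2.2

instance : Zero K27 := ⟨mk 0 0 0⟩
instance : One K27 := ⟨mk 1 0 0⟩
instance : Add K27 := ⟨fun u v => mk (c1 u + c1 v) (c2 u + c2 v) (c3 u + c3 v)⟩
instance : Neg K27 := ⟨fun u => mk (-c1 u) (-c2 u) (-c3 u)⟩
instance : Mul K27 := ⟨fun u v =>
  mk (c1 u*c1 v + c2 u*c3 v + c3 u*c2 v)
   (c1 u*c2 v + c2 u*c1 v + c2 u*c3 v + c3 u*c2 v + c3 u*c3 v)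
   (c1 u*c3 v + c2 u*c2 v + c3 u*c1 v + c3 u*c3 v)⟩

theorem ext {a b : K27} (h1 : c1 a = c1 b) (h2 : c2 a = c2 b) (h3 : c3 a = c3 b) : a = b := by
  cases a with | mk x a => cases a with | mk y z =>
  cases b with | mk x' b => cases b with | mk y' z' =>
  simp_all [c1, c2, c3]; rfl

@[simp] theorem c1_mul (u v : K27) : c1 (u*v) = c1 u*c1 v + c2 u*c3 v + c3 u*c2 v := rfl
@[simp] theorem c2_mul (u v : K27) :
    c2 (u*v) = c1 u*c2 v + c2 u*c1 v + c2 u*c3 v + c3 u*c2 v + c3 u*c3 v := rfl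
@[simp] theorem c3_mul (u v : K27) :
    c3 (u*v) = c1 u*c3 v + c2 u*c2 v + c3 u*c1 v + c3 u*c3 v := rfl
@[simp] theorem c1_add (u v : K27) : c1 (u+v) = c1 u + c1 v := rfl
@[simp] theorem c2_add (u v : K27) : c2 (u+v) = c2 u + c2 v := rfl
@[simp] theorem c3_add (u v : K27) : c3 (u+v) = c3 u + c3 v := rfl
@[simp] theorem c1_neg (u : K27) : c1 (-u) = -c1 u := rfl
@[simp] theorem c2_neg (u : K27) : c2 (-u) = -c2 u := rfl
@[simp] theorem c3_neg (u : K27) : c3 (-u) = -c3 u := rfl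
@[simp] theorem c1_zero : c1 0 = 0 := rfl
@[simp] theorem c2_zero : c2 0 = 0 := rfl
@[simp] theorem c3_zero : c3 0 = 0 := rfl
@[simp] theorem c1_one : c1 1 = 1 := rfl
@[simp] theorem c2_one : c2 1 = 0 := rfl
@[simp] theorem c3_one : c3 1 = 0 := rfl

instance instCommRing : CommRing K27 where
  add_assoc _ _ _ := ext (by simp; ring) (by simp; ring) (by simp; ring)
  zero_add _ := ext (by simp) (by simp) (by simp)
  add_zero _ := ext (by simp) (by simp) (by simp)
  add_comm _ _ := ext (by simp; ring) (by simp; ring) (by simp; ring)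
  neg_add_cancel _ := ext (by simp) (by simp) (by simp)
  mul_assoc _ _ _ := ext (by simp; ring) (by simp; ring) (by simp; ring)
  one_mul _ := ext (by simp) (by simp) (by simp)
  mul_one _ := ext (by simp) (by simp) (by simp)
  mul_comm _ _ := ext (by simp; ring) (by simp; ring) (by simp; ring)
  left_distrib _ _ _ := ext (by simp; ring) (by simp; ring) (by simp; ring)
  right_distrib _ _ _ := ext (by simp; ring) (by simp; ring) (by simp; ring)
  zero_mul _ := ext (by simp) (by simp) (by simp)
  mul_zero _ := ext (by simp) (by simp) (by simp)
  nsmul := nsmulRec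
  zsmul := zsmulRec

def kinv (u : K27) : K27 := u ^ (25 : ℕ)

instance instField : Field K27 where
  inv := kinv
  exists_pair_ne := ⟨0, 1, by decide⟩
  mul_inv_cancel := fun a h => (by decide : ∀ a : K27, a ≠ 0 → a * kinv a = 1) a h
  inv_zero := by decide
  nnqsmul := _
  qsmul := _

example : Fintype.card K27 = 27 := by decide

end K27
namespace K27
def code (u : K27) : ℕ := (c1 u).val + 3 * (c2 u).val + 9 * (c3 u).val

def sqB (a : K27) : Bool := Nat.testBit 38910522 (code a)

theorem sqB_iff (a : K27) : sqB a = true ↔ (a ≠ 0 ∧ ∃ c : K27, a = c^2) := by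
  revert a; decide

def elems : List K27 := [mk 0 0 0, mk 1 0 0, mk 2 0 0, mk 0 1 0, mk 1 1 0, mk 2 1 0,
  mk 0 2 0, mk 1 2 0, mk 2 2 0, mk 0 0 1, mk 1 0 1, mk 2 0 1, mk 0 1 1, mk 1 1 1,
  mk 2 1 1, mk 0 2 1, mk 1 2 1, mk 2 2 1, mk 0 0 2, mk 1 0 2, mk 2 0 2, mk 0 1 2,
  mk 1 1 2, mk 2 1 2, mk 0 2 2, mk 1 2 2, mk 2 2 2]

def v (n : ℕ) : K27 := elems.getD n 0

def checks (row : List Bool) (l : List K27) (y : K27) : Bool :=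
  (row.zip l).all fun p => p.1 == sqB (y - p.2)

def cand : ℕ → List K27
  | 0 => [(0 : K27)]
  | 1 => [(1 : K27)]
  | _ => elems

def step (n : ℕ) (ls : List (List K27)) : List (List K27) :=
  let row := (List.range n).map fun j => sqB (v n - v j)
  ls.flatMap fun l => ((cand n).filter (checks row l)).map fun y => l ++ [y]

def search : ℕ → List (List K27)
  | 0 => [[]]
  | n+1 => step n (search n)

theorem search27 : search 27 =
    [elems, elems.map (fun t => t^3), elems.map (fun t => t^9)] := by decide

end K27

namespace K27

theorem v_surj (x : K27) : ∃ j, j < 27 ∧ v j = x := by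
  have hx : x ∈ elems := by revert x; decide
  obtain ⟨i, hi, hix⟩ := List.mem_iff_getElem.mp hx
  have h27 : elems.length = 27 := by decide
  exact ⟨i, by omega, by rw [v, List.getD_eq_getElem _ _ hi, hix]⟩

theorem map_range_ext {f h : ℕ → K27} {n : ℕ}
    (heq : (List.range n).map f = (List.range n).map h) : ∀ j < n, f j = h j := by
  intro j hj
  have hl : j < ((List.range n).map f).length := by simpa using hj
  have hl' : j < ((List.range n).map h).length := by simpa using hj
  calc f j = ((List.range n).map f)[j]'hl := by simp
    _ = ((List.range n).map h)[j]'hl' := by simp only [heq]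
    _ = h j := by simp

theorem mem_elems : ∀ x : K27, x ∈ elems := by decide

theorem mem_search (g : K27 → K27) (hsym : ∀ a b : K27, sqB (b - a) = sqB (g b - g a))
    (h0 : g 0 = 0) (h1 : g 1 = 1) (n : ℕ) :
    ((List.range n).map fun j => g (v j)) ∈ search n := by
  induction n with
  | zero => simp [search]
  | succ n ih =>
    rw [List.range_succ, List.map_append]
    show _ ∈ step n (search n)
    rw [step]
    refine List.mem_flatMap.mpr ⟨_, ih, List.mem_map.mpr ⟨g (v n), List.mem_filter.mpr ⟨?_, ?_⟩, rfl⟩⟩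
    · cases n with
      | zero =>
        show g (v 0) ∈ [(0:K27)]
        have hv : v 0 = 0 := by decide
        rw [hv, h0]; exact List.mem_singleton.mpr rfl
      | succ m =>
        cases m with
        | zero =>
          show g (v 1) ∈ [(1:K27)]
          have hv : v 1 = 1 := by decide
          rw [hv, h1]; exact List.mem_singleton.mpr rfl
        | succ k => exact mem_elems _
    · rw [checks, List.all_eq_true]
      intro p hp
      obtain ⟨i, hilen, hip⟩ := List.mem_iff_getElem.mp hp
      have hlen : i < n := by
        simpa [List.length_zip] using hilen
      have : p = (sqB (v n - v i), g (v i)) := by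
        rw [← hip, List.getElem_zip]
        congr 1 <;> simp
      rw [this]
      simpa using hsym (v i) (v n)

theorem crux (g : K27 → K27) (hsym : ∀ a b : K27, sqB (b - a) = sqB (g b - g a))
    (h0 : g 0 = 0) (h1 : g 1 = 1) :
    (∀ x, g x = x) ∨ (∀ x, g x = x^3) ∨ (∀ x, g x = x^9) := by
  have hmem := mem_search g hsym h0 h1 27
  rw [search27] at hmem
  have heid : elems = (List.range 27).map (fun j => v j) := by decide
  have he3 : elems.map (fun t => t^3) = (List.range 27).map (fun j => (v j)^3) := by decide
  have he9 : elems.map (fun t => t^9) = (List.range 27).map (fun j => (v j)^9) := by decide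
  have key : ∀ (F : K27 → K27), ((List.range 27).map fun j => g (v j)) =
      ((List.range 27).map fun j => F (v j)) → ∀ x, g x = F x := by
    intro F hF x
    obtain ⟨j, hj, rfl⟩ := v_surj x
    exact map_range_ext hF j hj
  simp only [List.mem_cons, List.not_mem_nil, or_false] at hmem
  rcases hmem with h | h | h
  · exact Or.inl (key _ (h.trans heid))
  · exact Or.inr (Or.inl (key _ (h.trans he3)))
  · exact Or.inr (Or.inr (key _ (h.trans he9)))

end K27

/-- `F₂₇`, a finite field with 27 elements. -/
abbrev F27 : Type := GaloisField 3 3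

/-- `a` is a nonzero square in `F₂₇`. -/
def IsNonzeroSquare (a : F27) : Prop := a ≠ 0 ∧ ∃ c : F27, a = c ^ 2

/-- `g` is a symmetry of the tournament `Γ` on `F₂₇` whose directed edges `(a, b)`
are the pairs with `b - a` a nonzero square. -/
def IsTournamentSym (g : Equiv.Perm F27) : Prop :=
  ∀ a b : F27, IsNonzeroSquare (b - a) ↔ IsNonzeroSquare (g b - g a)

noncomputable instance : Fintype F27 := Fintype.ofFinite _

theorem F27_card : Fintype.card F27 = 27 := by
  have h := GaloisField.card 3 3 (by norm_num)
  rwa [Nat.card_eq_fintype_card] at h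

noncomputable def eF : K27 ≃+* F27 :=
  FiniteField.ringEquivOfCardEq (by rw [F27_card]; decide)

theorem eF_sq (t : K27) : IsNonzeroSquare (eF t) ↔ K27.sqB t = true := by
  rw [K27.sqB_iff]
  constructor
  · rintro ⟨h0, c, hc⟩
    refine ⟨fun ht => h0 (by rw [ht, map_zero]), eF.symm c, eF.injective ?_⟩
    rw [map_pow, RingEquiv.apply_symm_apply, hc]
  · rintro ⟨h0, c, rfl⟩
    exact ⟨fun h => h0 (eF.injective (by rw [h, map_zero])), eF c, by rw [map_pow]⟩

theorem pow3_inj (i : Fin 3) : Function.Injective (fun x : F27 => x ^ (3 ^ (i : ℕ))) := by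
  intro a b h
  have hq : (3 : ℕ) ^ (i : ℕ) ≠ 0 := pow_ne_zero _ (by norm_num)
  have : (a - b) ^ (3 ^ (i : ℕ)) = 0 := by
    rw [sub_pow_char_pow]
    simpa using sub_eq_zero.mpr h
  exact sub_eq_zero.mp (pow_eq_zero_iff hq |>.mp this)

theorem pow3_surj (i : Fin 3) : Function.Surjective (fun x : F27 => x ^ (3 ^ (i : ℕ))) :=
  Finite.surjective_of_injective (pow3_inj i)

theorem sq_pow (i : Fin 3) (t : F27) :
    IsNonzeroSquare (t ^ (3 ^ (i : ℕ))) ↔ IsNonzeroSquare t := by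
  have hq : (3 : ℕ) ^ (i : ℕ) ≠ 0 := pow_ne_zero _ (by norm_num)
  constructor
  · rintro ⟨h0, c, hc⟩
    obtain ⟨d, hd⟩ := pow3_surj i c
    have hd' : d ^ (3 ^ (i : ℕ)) = c := hd
    refine ⟨fun ht => h0 (by rw [ht, zero_pow hq]), d, pow3_inj i ?_⟩
    show t ^ (3 ^ (i : ℕ)) = (d ^ 2) ^ (3 ^ (i : ℕ))
    rw [hc, ← hd', ← pow_mul, ← pow_mul, mul_comm]
  · rintro ⟨h0, c, rfl⟩
    exact ⟨pow_ne_zero _ h0, c ^ (3 ^ (i : ℕ)), by rw [← pow_mul, mul_comm 2, pow_mul]⟩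

theorem sq_mul {a : F27} (ha : IsNonzeroSquare a) (t : F27) :
    IsNonzeroSquare (a * t) ↔ IsNonzeroSquare t := by
  obtain ⟨h0, c, rfl⟩ := ha
  have hc : c ≠ 0 := fun h => h0 (by rw [h]; ring)
  constructor
  · rintro ⟨h1, d, hd⟩
    refine ⟨fun ht => h1 (by rw [ht, mul_zero]), d * c⁻¹, ?_⟩
    have : (d * c⁻¹) ^ 2 = t := by
      rw [mul_pow, ← hd]
      field_simp
    exact this.symm
  · rintro ⟨h1, d, rfl⟩
    exact ⟨mul_ne_zero h0 h1, c * d, by ring⟩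

theorem one_sq' : IsNonzeroSquare (1 : F27) := ⟨one_ne_zero, 1, by ring⟩

noncomputable def pifun (a b : F27) (i : Fin 3) : F27 → F27 := fun x => a * x ^ (3 ^ (i : ℕ)) + b

theorem pifun_sub (a b : F27) (i : Fin 3) (x y : F27) :
    pifun a b i x - pifun a b i y = a * (x - y) ^ (3 ^ (i : ℕ)) := by
  simp only [pifun]
  rw [sub_pow_char_pow]; ring

theorem pifun_inj {a : F27} (ha : a ≠ 0) (b : F27) (i : Fin 3) :
    Function.Injective (pifun a b i) := by
  intro x y h
  have h2 : a * (x - y) ^ (3 ^ (i : ℕ)) = 0 := by rw [← pifun_sub, h, sub_self]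
  have h3 : (x - y) ^ (3 ^ (i : ℕ)) = 0 := by
    rcases mul_eq_zero.mp h2 with h | h
    · exact absurd h ha
    · exact h
  have hq : (3 : ℕ) ^ (i : ℕ) ≠ 0 := pow_ne_zero _ (by norm_num)
  exact sub_eq_zero.mp (pow_eq_zero_iff hq |>.mp h3)

noncomputable def piperm {a : F27} (ha : a ≠ 0) (b : F27) (i : Fin 3) : Equiv.Perm F27 :=
  Equiv.ofBijective (pifun a b i) (Finite.injective_iff_bijective.mp (pifun_inj ha b i))

theorem piperm_apply {a : F27} (ha : a ≠ 0) (b : F27) (i : Fin 3) (x : F27) :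
    piperm ha b i x = a * x ^ (3 ^ (i : ℕ)) + b := rfl

theorem piperm_sym {a : F27} (ha : IsNonzeroSquare a) (b : F27) (i : Fin 3) :
    IsTournamentSym (piperm ha.1 b i) := by
  intro x y
  have : piperm ha.1 b i y - piperm ha.1 b i x = a * (y - x) ^ (3 ^ (i : ℕ)) :=
    pifun_sub a b i y x
  rw [this, sq_mul ha, sq_pow]

attribute [irreducible] eF
theorem exists_wit : ∃ t : K27, t^3 ≠ t ∧ t^9 ≠ t ∧ t^9 ≠ t^3 := by decide

theorem pow_distinct (i j : Fin 3) (h : ∀ x : F27, x ^ (3^(i:ℕ)) = x ^ (3^(j:ℕ))) : i = j := by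
  obtain ⟨t, h3, h9, h93⟩ := exists_wit
  have hw3 : (eF t)^3 ≠ eF t := by
    rw [← map_pow]; exact fun hE => h3 (eF.injective hE)
  have hw9 : (eF t)^9 ≠ eF t := by
    rw [← map_pow]; exact fun hE => h9 (eF.injective hE)
  have hw93 : (eF t)^9 ≠ (eF t)^3 := by
    rw [← map_pow, ← map_pow]; exact fun hE => h93 (eF.injective hE)
  have hw := h (eF t)
  fin_cases i <;> fin_cases j <;> revert hw <;> norm_num <;>
    first
      | rfl
      | (intro hw; first
          | exact absurd hw hw3 | exact absurd hw.symm hw3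
          | exact absurd hw hw9 | exact absurd hw.symm hw9
          | exact absurd hw hw93 | exact absurd hw.symm hw93)

theorem pifun_params {a a' b b' : F27} {i i' : Fin 3} (ha : a ≠ 0)
    (hfun : ∀ x : F27, pifun a b i x = pifun a' b' i' x) :
    a = a' ∧ b = b' ∧ i = i' := by
  have hq : (3 : ℕ) ^ (i : ℕ) ≠ 0 := pow_ne_zero _ (by norm_num)
  have hq' : (3 : ℕ) ^ (i' : ℕ) ≠ 0 := pow_ne_zero _ (by norm_num)
  have hb : b = b' := by
    have h0 := hfun 0
    simp only [pifun, zero_pow hq, zero_pow hq', mul_zero, zero_add] at h0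
    exact h0
  have haa : a = a' := by
    have h1 := hfun 1
    simp only [pifun, one_pow, mul_one, hb] at h1
    exact add_right_cancel h1
  refine ⟨haa, hb, pow_distinct i i' fun x => ?_⟩
  have hx := hfun x
  simp only [pifun, hb, ← haa] at hx
  exact mul_left_cancel₀ ha (add_right_cancel hx)

def SymGroup : Subgroup (Equiv.Perm F27) where
  carrier := { g | IsTournamentSym g }
  one_mem' := by intro a b; simp
  mul_mem' := by
    intro g h hg hh a b
    have := (hh a b).trans (hg (h a) (h b))
    simpa using this
  inv_mem' := by
    intro g hg a b
    have := hg (g⁻¹ a) (g⁻¹ b)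
    simp only [← Equiv.Perm.mul_apply, mul_inv_cancel, Equiv.Perm.one_apply] at this
    exact this.symm

noncomputable def Phi : ({a : F27 // IsNonzeroSquare a} × F27 × Fin 3) → ↥SymGroup :=
  fun p => ⟨piperm p.1.2.1 p.2.1 p.2.2, piperm_sym p.1.2 p.2.1 p.2.2⟩

theorem Phi_bij : Function.Bijective Phi := by
  constructor
  · rintro ⟨⟨a, ha⟩, b, i⟩ ⟨⟨a', ha'⟩, b', i'⟩ hpq
    simp only [Phi, Subtype.mk.injEq] at hpq
    have hfun : ∀ x : F27, pifun a b i x = pifun a' b' i' x := fun x =>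
      DFunLike.congr_fun (congrArg Subtype.val hpq) x
    obtain ⟨h1, h2, h3⟩ := pifun_params ha.1 hfun
    subst h1; subst h2; subst h3; rfl
  · rintro ⟨g, hg⟩
    have hg' : IsTournamentSym g := hg
    have ha : IsNonzeroSquare (g 1 - g 0) := by
      have h10 : IsNonzeroSquare ((1 : F27) - 0) := by simpa using one_sq'
      exact (hg' 0 1).mp h10
    set a : F27 := g 1 - g 0 with haa
    set b : F27 := g 0 with hbb
    have ha0 : a ≠ 0 := ha.1
    have hainv : IsNonzeroSquare a⁻¹ := by
      obtain ⟨h0, c, hc⟩ := ha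
      exact ⟨inv_ne_zero h0, c⁻¹, by rw [hc, inv_pow]⟩
    set h : F27 → F27 := fun x => a⁻¹ * (g x - b) with hh
    have hsymh : ∀ x y : F27, IsNonzeroSquare (y - x) ↔ IsNonzeroSquare (h y - h x) := by
      intro x y
      have e1 : h y - h x = a⁻¹ * (g y - g x) := by rw [hh]; ring
      rw [e1, sq_mul hainv]
      exact hg' x y
    set k : K27 → K27 := fun t => eF.symm (h (eF t)) with hk
    have hsymk : ∀ s t : K27, K27.sqB (t - s) = K27.sqB (k t - k s) := by
      intro s t
      have e1 : k t - k s = eF.symm (h (eF t) - h (eF s)) := by rw [hk]; simp [map_sub]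
      have i1 : (K27.sqB (t - s) = true) ↔ (K27.sqB (k t - k s) = true) := by
        rw [← eF_sq, ← eF_sq, e1, RingEquiv.apply_symm_apply, map_sub]
        exact hsymh (eF s) (eF t)
      exact Bool.eq_iff_iff.mpr i1
    have hk0 : k 0 = 0 := by
      rw [hk]
      simp only [map_zero]
      rw [hh]
      simp only [hbb, sub_self, mul_zero, map_zero]
    have hk1 : k 1 = 1 := by
      rw [hk]
      simp only [map_one]
      rw [hh]
      simp only []
      rw [show g 1 - b = a by rw [haa, hbb], inv_mul_cancel₀ ha0, map_one]
    have main : ∀ (i : Fin 3), (∀ t : K27, k t = t ^ ((3:ℕ)^(i:ℕ))) →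
        Phi ⟨⟨a, ha⟩, b, i⟩ = ⟨g, hg⟩ := by
      intro i hki
      apply Subtype.ext
      apply Equiv.ext
      intro x
      have h1 : h x = x ^ ((3:ℕ)^(i:ℕ)) := by
        have e2 := hki (eF.symm x)
        rw [hk] at e2
        simp only [RingEquiv.apply_symm_apply] at e2
        have e3 := congrArg eF e2
        rw [RingEquiv.apply_symm_apply, map_pow, RingEquiv.apply_symm_apply] at e3
        exact e3
      show a * x ^ ((3:ℕ)^(i:ℕ)) + b = g x
      rw [← h1, hh]
      simp only []
      rw [← mul_assoc, mul_inv_cancel₀ ha0, one_mul]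
      ring
    rcases K27.crux k hsymk hk0 hk1 with hc | hc | hc
    · exact ⟨⟨⟨a, ha⟩, b, 0⟩, main 0 (fun t => by rw [hc t]; norm_num)⟩
    · exact ⟨⟨⟨a, ha⟩, b, 1⟩, main 1 (fun t => by rw [hc t]; norm_num)⟩
    · exact ⟨⟨⟨a, ha⟩, b, 2⟩, main 2 (fun t => by rw [hc t]; norm_num)⟩

theorem cardQ : Nat.card {a : F27 // IsNonzeroSquare a} = 13 := by
  have e2 : {t : K27 // K27.sqB t = true} ≃ {a : F27 // IsNonzeroSquare a} :=
    Equiv.subtypeEquiv eF.toEquiv (fun t => by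
      rw [show eF.toEquiv t = eF t from rfl, eF_sq])
  rw [← Nat.card_congr e2, Nat.card_eq_fintype_card]
  decide

/-- The group `Sym(Γ)` of all symmetries of the tournament `Γ` has order exactly 1053. -/
theorem statement7 :
    ∃ S : Subgroup (Equiv.Perm F27),
      (S : Set (Equiv.Perm F27)) = { g | IsTournamentSym g } ∧
      Nat.card S = 1053 := by
  refine ⟨SymGroup, rfl, ?_⟩
  rw [← Nat.card_congr (Equiv.ofBijective Phi Phi_bij)]
  rw [Nat.card_prod, Nat.card_prod, cardQ]
  rw [Nat.card_eq_fintype_card (α := F27), F27_card]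
  simp
end

section
/- A permutation h of F₂₇ belongs to the normalizer of G₃₅₁ in Equiv.Perm F₂₇ (i.e., h·G₃₅₁·h⁻¹ = G₃₅₁) if and only if there exist a ∈ F₂₇ with a ≠ 0, b ∈ F₂₇, and k ∈ {0, 1, 2} such that h(x) = a·x^(3^k) + b for all x ∈ F₂₇. Consequently, this normalizer has order exactly 2106. -/
/-- The set of affine permutations `x ↦ a·x + b` with `a` a nonzero square. -/
def affineSet : Set (Equiv.Perm F27) :=
  { g | ∃ a b : F27, IsNonzeroSquare a ∧ ∀ x : F27, g x = a * x + b }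

noncomputable instance : DecidableEq F27 := Classical.decEq _


lemma cardF : Nat.card F27 = 27 := GaloisField.card 3 3 (by norm_num)

lemma cardU : Nat.card F27ˣ = 26 := by rw [Nat.card_units, cardF]

lemma pow26 {x : F27} (hx : x ≠ 0) : x ^ 26 = 1 := by
  have := FiniteField.pow_card_sub_one_eq_one x hx
  rwa [← Nat.card_eq_fintype_card, cardF] at this

lemma two_ne : (2 : F27) ≠ 0 := by
  intro h
  have h2 : ((2:ℕ) : F27) = 0 := by push_cast; exact h
  rw [CharP.cast_eq_zero_iff F27 3 2] at h2
  norm_num at h2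

lemma one_ne_neg_one : (1 : F27) ≠ -1 := fun h => two_ne (by linear_combination h)

lemma subring_eq_top (S : Subring F27) (x : F27) (hx : x ∈ S)
    (h0 : x ≠ 0) (h1 : x ≠ 1) (h2 : x ≠ -1) : ∀ y : F27, y ∈ S := by
  let Ru : Subgroup F27ˣ :=
    { carrier := {u | (u : F27) ∈ S}
      one_mem' := by simpa using S.one_mem
      mul_mem' := fun {a b} ha hb => by simpa using S.mul_mem ha hb
      inv_mem' := by
        intro u hu
        have h26 : (u : F27) ^ 26 = 1 := pow26 u.ne_zero
        have he : ((u⁻¹ : F27ˣ) : F27) = (u : F27) ^ 25 := by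
          rw [Units.val_inv_eq_inv_val]
          refine inv_eq_of_mul_eq_one_right ?_
          calc (u:F27) * (u:F27) ^ 25 = (u:F27) ^ 26 := by ring
          _ = 1 := h26
        show ((u⁻¹ : F27ˣ) : F27) ∈ S
        rw [he]; exact S.pow_mem hu 25 }
  have hRu : Nat.card Ru ∣ 26 := by rw [← cardU]; exact Subgroup.card_subgroup_dvd_card Ru
  have hS : Nat.card S ∣ 27 := by rw [← cardF]; exact AddSubgroup.card_addSubgroup_dvd_card S.toAddSubgroup
  have hequiv : Ru ≃ ((S : Set F27) \ {0} : Set F27) :=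
    ⟨fun u => ⟨((u : F27ˣ) : F27), ⟨u.2, (u : F27ˣ).ne_zero⟩⟩,
      fun y => ⟨Units.mk0 (y : F27) y.2.2, y.2.1⟩,
      fun u => Subtype.ext (Units.ext rfl), fun y => Subtype.ext rfl⟩
  have hcard1 : Nat.card Ru = ((S : Set F27) \ {0}).ncard := by
    rw [Nat.card_congr hequiv]; exact Nat.card_coe_set_eq _
  have hcard2 : ((S : Set F27) \ {0}).ncard + 1 = (S : Set F27).ncard :=
    Set.ncard_diff_singleton_add_one S.zero_mem (Set.toFinite _)
  have hSc : Nat.card S = (S : Set F27).ncard := Nat.card_coe_set_eq _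
  have h4 : 4 ≤ Nat.card S := by
    rw [hSc]
    have hsub : ({0, 1, -1, x} : Set F27).ncard ≤ (S : Set F27).ncard := by
      apply Set.ncard_le_ncard _ (Set.toFinite _)
      intro y hy
      simp only [Set.mem_insert_iff, Set.mem_singleton_iff] at hy
      rcases hy with rfl|rfl|rfl|rfl
      exacts [S.zero_mem, S.one_mem, S.neg_mem S.one_mem, hx]
    refine le_trans (le_of_eq ?_) hsub
    rw [Set.ncard_insert_of_notMem (by
        simp only [Set.mem_insert_iff, Set.mem_singleton_iff]
        push_neg
        refine ⟨zero_ne_one, fun h => two_ne (by linear_combination 2*h), Ne.symm h0⟩),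
      Set.ncard_insert_of_notMem (by
        simp only [Set.mem_insert_iff, Set.mem_singleton_iff]
        push_neg
        exact ⟨one_ne_neg_one, Ne.symm h1⟩),
      Set.ncard_insert_of_notMem (by simpa using Ne.symm h2), Set.ncard_singleton]
  have hRu26 : Nat.card S - 1 ∣ 26 := by
    rw [hSc, ← hcard2, Nat.add_sub_cancel, ← hcard1]; exact hRu
  have h27 : Nat.card S = 27 := by
    have hle : Nat.card S ≤ 27 := Nat.le_of_dvd (by norm_num) hS
    interval_cases h : Nat.card S <;> omega
  have htop : S.toAddSubgroup = ⊤ := AddSubgroup.eq_top_of_card_eq _ (by rw [cardF]; exact h27)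
  exact fun y => (AddSubgroup.eq_top_iff' _).mp htop y

lemma exists_gen : ∃ α : F27ˣ, orderOf α = 26 := by
  obtain ⟨α, hα⟩ := IsCyclic.exists_generator (α := F27ˣ)
  exact ⟨α, by rw [orderOf_eq_card_of_forall_mem_zpowers hα]; exact cardU⟩

lemma ringhom_classify (f : F27 →+* F27) : ∃ k : ℕ, k ≤ 2 ∧ ∀ x : F27, f x = x ^ 3 ^ k := by
  obtain ⟨α, hα⟩ := exists_gen
  set a : F27 := (α : F27) with ha
  have hsq : ∀ m : ℕ, α ^ m = 1 → (26 ∣ m) := fun m h => hα ▸ orderOf_dvd_of_pow_eq_one h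
  have ha0 : a ≠ 0 := α.ne_zero
  have hpow : ∀ m : ℕ, a ^ m = (↑(α ^ m) : F27) := fun m => (Units.val_pow_eq_pow_val α m).symm
  have hne : ∀ m n : ℕ, m < n → n ≤ 9 → a ^ n ≠ a ^ m := by
    intro m n hmn h9 h
    have : α ^ n = α ^ m := Units.ext (by rw [← hpow, ← hpow, h])
    have h1 : α ^ (n - m) = 1 := by
      have h2 : α ^ (n - m) * α ^ m = 1 * α ^ m := by
        rw [← pow_add, Nat.sub_add_cancel hmn.le, this, one_mul]
      exact mul_right_cancel h2
    have := hsq _ h1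
    omega
  -- f fixes prime field
  have hfix : ∀ r : ZMod 3, f (algebraMap (ZMod 3) F27 r) = algebraMap (ZMod 3) F27 r := by
    intro r
    have : f.comp (algebraMap (ZMod 3) F27) = algebraMap (ZMod 3) F27 := Subsingleton.elim _ _
    exact congrFun (congrArg (fun g => g.toFun) this) r
  -- linear dependence
  have hdep : ¬ LinearIndependent (ZMod 3) (fun i : Fin 4 => a ^ (i : ℕ)) := by
    intro hli
    have := hli.fintype_card_le_finrank
    rw [GaloisField.finrank 3 (by norm_num), Fintype.card_fin] at this
    omega
  rw [Fintype.not_linearIndependent_iff] at hdep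
  obtain ⟨g, hg, i0, hi0⟩ := hdep
  set c : Fin 4 → F27 := fun i => algebraMap (ZMod 3) F27 (g i) with hc
  have hcfix : ∀ (F : F27 →+* F27), (∀ r : ZMod 3, F (algebraMap (ZMod 3) F27 r) = algebraMap (ZMod 3) F27 r) →
      ∀ t : F27, F (∑ i : Fin 4, c i * t ^ (i:ℕ)) = ∑ i : Fin 4, c i * (F t) ^ (i:ℕ) := by
    intro F hF t
    rw [map_sum]
    refine Finset.sum_congr rfl fun i _ => ?_
    rw [map_mul, map_pow, hc]; rw [hF]
  have hPa : (∑ i : Fin 4, c i * a ^ (i:ℕ)) = 0 := by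
    rw [← hg]
    refine Finset.sum_congr rfl fun i _ => ?_
    rw [Algebra.smul_def]
  -- frobenius fixes prime field
  set φ := frobenius F27 3 with hφ
  have hfrobfix : ∀ r : ZMod 3, φ (algebraMap (ZMod 3) F27 r) = algebraMap (ZMod 3) F27 r :=
    fun r => RingHom.congr_fun (Subsingleton.elim (φ.comp (algebraMap (ZMod 3) F27)) (algebraMap (ZMod 3) F27)) r
  have hφ2fix : ∀ r : ZMod 3, (φ.comp φ) (algebraMap (ZMod 3) F27 r) =  algebraMap (ZMod 3) F27 r := by
    intro r; simp only [RingHom.comp_apply, hfrobfix]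
  -- the polynomial
  set p : Polynomial F27 := ∑ i : Fin 4, Polynomial.C (c i) * Polynomial.X ^ (i : ℕ) with hp
  have hpeval : ∀ t : F27, p.eval t = ∑ i : Fin 4, c i * t ^ (i:ℕ) := by
    intro t
    rw [hp, Polynomial.eval_finset_sum]
    refine Finset.sum_congr rfl fun i _ => ?_
    simp
  have hpne : p ≠ 0 := by
    intro h
    have hco : p.coeff (i0 : ℕ) = c i0 := by
      rw [hp, Polynomial.finset_sum_coeff]
      rw [Finset.sum_eq_single i0]
      · simp
      · intro b _ hb
        rw [Polynomial.coeff_C_mul, Polynomial.coeff_X_pow,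
          if_neg (fun hh => hb (Fin.ext hh.symm)), mul_zero]
      · simp
    rw [h, Polynomial.coeff_zero] at hco
    refine hi0 ((algebraMap (ZMod 3) F27).injective ?_)
    rw [map_zero]
    exact hco.symm
  have hdeg : p.natDegree ≤ 3 := by
    rw [hp]
    refine Polynomial.natDegree_sum_le_of_forall_le _ _ fun i _ => ?_
    exact le_trans (Polynomial.natDegree_C_mul_le _ _) (by simpa using Nat.lt_succ_iff.mp i.2)
  have hroot : ∀ t : F27, (∑ i : Fin 4, c i * t ^ (i:ℕ)) = 0 → t ∈ p.roots.toFinset := by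
    intro t ht
    rw [Multiset.mem_toFinset, Polynomial.mem_roots']
    exact ⟨hpne, by rw [Polynomial.IsRoot.def, hpeval]; exact ht⟩
  -- the four roots
  have hr1 : a ∈ p.roots.toFinset := hroot a hPa
  have hφa : φ a = a ^ 3 := by rw [hφ, frobenius_def]
  have hφ2a : (φ.comp φ) a = a ^ 9 := by
    show φ (φ a) = a ^ 9
    rw [hφa, hφ, frobenius_def, ← pow_mul]
  have hr3 : a ^ 3 ∈ p.roots.toFinset := by
    refine hroot _ ?_
    rw [← hφa, ← hcfix φ hfrobfix a, hPa, map_zero]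
  have hr9 : a ^ 9 ∈ p.roots.toFinset := by
    refine hroot _ ?_
    rw [← hφ2a, ← hcfix (φ.comp φ) hφ2fix a, hPa, map_zero]
  have hrf : f a ∈ p.roots.toFinset := by
    refine hroot _ ?_
    rw [← hcfix f hfix a, hPa, map_zero]
  -- f a must be one of a, a^3, a^9
  have hfa : f a = a ∨ f a = a ^ 3 ∨ f a = a ^ 9 := by
    by_contra hcon
    push_neg at hcon
    obtain ⟨hc1, hc3, hc9⟩ := hcon
    have hsub : ({a, a^3, a^9, f a} : Finset F27) ⊆ p.roots.toFinset := by
      intro t ht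
      simp only [Finset.mem_insert, Finset.mem_singleton] at ht
      rcases ht with rfl|rfl|rfl|rfl
      exacts [hr1, hr3, hr9, hrf]
    have hcard : ({a, a^3, a^9, f a} : Finset F27).card = 4 := by
      rw [Finset.card_insert_of_notMem, Finset.card_insert_of_notMem,
        Finset.card_insert_of_notMem, Finset.card_singleton]
      · simp only [Finset.mem_singleton]; exact fun h => hc9 h.symm
      · simp only [Finset.mem_insert, Finset.mem_singleton]
        push_neg
        exact ⟨fun h => hne 3 9 (by norm_num) (by norm_num) h.symm, fun h => hc3 h.symm⟩
      · simp only [Finset.mem_insert, Finset.mem_singleton]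
        push_neg
        refine ⟨?_, ?_, fun h => hc1 h.symm⟩
        · intro h; exact hne 1 3 (by norm_num) (by norm_num) (by rw [pow_one]; exact h.symm)
        · intro h; exact hne 1 9 (by norm_num) (by norm_num) (by rw [pow_one]; exact h.symm)
    have : 4 ≤ p.natDegree := by
      calc 4 = ({a, a^3, a^9, f a} : Finset F27).card := hcard.symm
      _ ≤ p.roots.toFinset.card := Finset.card_le_card hsub
      _ ≤ Multiset.card p.roots := Multiset.toFinset_card_le _
      _ ≤ p.natDegree := Polynomial.card_roots' p
    omega
  -- conclude via eqLocus
  have key : ∀ (F : F27 →+* F27) (k : ℕ), (∀ x, F x = x ^ 3 ^ k) → f a = F a → ∀ x, f x = x ^ 3 ^ k := by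
    intro F k hFk hfae x
    have hmem := subring_eq_top (f.eqLocus F) a (by exact hfae)
      ha0
      (fun h => by
        have h1 : α = 1 := Units.val_eq_one.mp h
        rw [h1, orderOf_one] at hα; omega)
      (fun h => by
        have h2 : a ^ 2 = 1 := by rw [h]; ring
        have hu2 : α ^ 2 = 1 := Units.ext (by rw [Units.val_pow_eq_pow_val, Units.val_one]; exact h2)
        have := hsq 2 hu2
        omega)
      x
    rw [show f x = F x from hmem, hFk]
  rcases hfa with h|h|h
  · exact ⟨0, by norm_num, key (RingHom.id F27) 0 (fun x => by simp) (by simpa using h)⟩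
  · exact ⟨1, by norm_num, key φ 1 (fun x => by rw [hφ, frobenius_def]; norm_num) (by rw [h, ← hφa])⟩
  · refine ⟨2, by norm_num, key (φ.comp φ) 2 (fun x => ?_) (by rw [h, ← hφ2a])⟩
    show φ (φ x) = _
    rw [hφ, frobenius_def, frobenius_def, ← pow_mul]
    norm_num

lemma pow27 (x : F27) : x ^ 27 = x := by
  have := FiniteField.pow_card x
  rwa [← Nat.card_eq_fintype_card, cardF] at this

def SemiForm (h : Equiv.Perm F27) : Prop :=
  ∃ a b : F27, a ≠ 0 ∧ ∃ k : ℕ, k ≤ 2 ∧ ∀ x : F27, h x = a * x ^ (3 ^ k) + b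

lemma frob_add (k : ℕ) (x y : F27) : (x + y) ^ 3 ^ k = x ^ 3 ^ k + y ^ 3 ^ k :=
  add_pow_char_pow ..

lemma pow_cancel {k : ℕ} (hk : k ≤ 3) (x : F27) : (x ^ 3 ^ k) ^ 3 ^ (3 - k) = x := by
  rw [← pow_mul, ← pow_add, Nat.add_sub_cancel' hk, show (3:ℕ)^3 = 27 by norm_num]
  exact pow27 x

lemma pow_cancel' {k : ℕ} (hk : k ≤ 3) (x : F27) : (x ^ 3 ^ (3 - k)) ^ 3 ^ k = x := by
  rw [← pow_mul, ← pow_add, Nat.sub_add_cancel hk, show (3:ℕ)^3 = 27 by norm_num]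
  exact pow27 x

lemma semi_inv_apply {h : Equiv.Perm F27} {a b : F27} {k : ℕ} (ha : a ≠ 0) (hk : k ≤ 2)
    (hf : ∀ x : F27, h x = a * x ^ (3 ^ k) + b) (y : F27) :
    h⁻¹ y = (a⁻¹ * (y - b)) ^ 3 ^ (3 - k) := by
  have : h ((a⁻¹ * (y - b)) ^ 3 ^ (3 - k)) = y := by
    rw [hf, pow_cancel' (by omega)]
    field_simp
    ring
  calc h⁻¹ y = h⁻¹ (h ((a⁻¹ * (y - b)) ^ 3 ^ (3 - k))) := by rw [this]
  _ = _ := h.symm_apply_apply _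

lemma semiForm_inv {h : Equiv.Perm F27} (hs : SemiForm h) : SemiForm h⁻¹ := by
  obtain ⟨a, b, ha, k, hk, hf⟩ := hs
  refine ⟨(a⁻¹) ^ 3 ^ (3 - k), (-(a⁻¹ * b)) ^ 3 ^ (3 - k),
      pow_ne_zero _ (inv_ne_zero ha), (3 - k) % 3, by omega, fun y => ?_⟩
  rw [semi_inv_apply ha hk hf y]
  have hexp : ∀ z : F27, z ^ 3 ^ ((3 - k) % 3) = z ^ 3 ^ (3 - k) := by
    intro z
    interval_cases k
    · show z ^ 3 ^ 0 = z ^ 3 ^ 3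
      rw [show (3:ℕ)^3 = 27 by norm_num, pow27]
      norm_num
    · rfl
    · rfl
  rw [hexp]
  rw [show a⁻¹ * (y - b) = a⁻¹ * y + (-(a⁻¹ * b)) by ring, frob_add, mul_pow]

lemma conj_mem {h g : Equiv.Perm F27} (hs : SemiForm h) (hg : g ∈ affineSet) :
    h * g * h⁻¹ ∈ affineSet := by
  obtain ⟨a, b, ha, k, hk, hf⟩ := hs
  obtain ⟨c, d, ⟨hc0, e, hce⟩, hgf⟩ := hg
  refine ⟨c ^ 3 ^ k, a * d ^ 3 ^ k + b - c ^ 3 ^ k * b,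
    ⟨pow_ne_zero _ hc0, e ^ 3 ^ k, by rw [hce, ← pow_mul, ← pow_mul, mul_comm 2]⟩, fun x => ?_⟩
  show h (g (h⁻¹ x)) = _
  rw [semi_inv_apply ha hk hf x, hgf, hf]
  rw [frob_add, mul_pow, pow_cancel' (by omega)]
  field_simp
  ring

lemma three_eq_zero : (3 : F27) = 0 := by
  have : ((3:ℕ) : F27) = 0 := by rw [CharP.cast_eq_zero_iff F27 3 3]
  simpa using this

lemma square_thirteen {c : F27} (hc : IsNonzeroSquare c) : c ^ 13 = 1 := by
  obtain ⟨hc0, e, rfl⟩ := hc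
  have he : e ≠ 0 := fun h => hc0 (by rw [h]; ring)
  rw [← pow_mul]
  exact pow26 he

lemma perm_inv_apply_self (h : Equiv.Perm F27) (x : F27) : h⁻¹ (h x) = x := h.symm_apply_apply x

lemma perm_apply_inv_self (h : Equiv.Perm F27) (x : F27) : h (h⁻¹ x) = x := h.apply_symm_apply x

lemma reverse_dir (G : Subgroup (Equiv.Perm F27))
    (hG : (G : Set (Equiv.Perm F27)) = affineSet)
    (h : Equiv.Perm F27) (hn : h ∈ Subgroup.normalizer (G : Set (Equiv.Perm F27))) : SemiForm h := by
  rw [Subgroup.mem_normalizer_iff] at hn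
  have memG : ∀ g : Equiv.Perm F27, g ∈ G ↔ g ∈ affineSet := fun g => by
    rw [← hG]; rfl
  -- translations are in G
  have htrans : ∀ b : F27, Equiv.addLeft b ∈ G := by
    intro b
    rw [memG]
    exact ⟨1, b, ⟨one_ne_zero, 1, by ring⟩, fun x => by simp [add_comm]⟩
  -- step 1 : h is affine-additive
  have hadd : ∀ b y : F27, h (b + y) = h y + (h b - h 0) := by
    intro b y
    obtain ⟨c, d, hcsq, hcd⟩ := (memG _).mp ((hn (Equiv.addLeft b)).mp (htrans b))
    have happ : ∀ x : F27, h (b + h⁻¹ x) = c * x + d := by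
      intro x
      have := hcd x
      simpa using this
    -- cube is identity
    have hcube : ∀ x : F27, c * (c * (c * x + d) + d) + d = x := by
      intro x
      have e1 : (h * Equiv.addLeft b * h⁻¹) x = c * x + d := hcd x
      have e3 : ((h * Equiv.addLeft b * h⁻¹) : Equiv.Perm F27) ((h * Equiv.addLeft b * h⁻¹) ((h * Equiv.addLeft b * h⁻¹) x)) = x := by
        show h (b + h⁻¹ (h (b + h⁻¹ (h (b + h⁻¹ x))))) = x
        rw [perm_inv_apply_self h, perm_inv_apply_self h]
        have : b + (b + (b + h⁻¹ x)) = h⁻¹ x := by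
          have h3 : b + (b + b) = 3 * b := by ring
          rw [← add_assoc, ← add_assoc]
          rw [show b + b + b + h⁻¹ x = (3*b) + h⁻¹ x by ring, three_eq_zero]
          ring
        rw [this, perm_apply_inv_self]
      simp only [hcd] at e3
      exact e3
    have hc3 : c ^ 3 = 1 := by linear_combination (hcube 1) - (hcube 0)
    have hc1 : c = 1 := by
      have h13 := square_thirteen hcsq
      have h27 : c ^ 27 = c := by
        calc c ^ 27 = (c ^ 13) ^ 2 * c := by ring
        _ = c := by rw [h13]; ring
      calc c = c ^ 27 := h27.symm
      _ = (c ^ 3) ^ 9 := by ring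
      _ = 1 := by rw [hc3]; norm_num
    -- now h (b + y) = y + d with our substitution x := h y
    have key : ∀ y, h (b + y) = h y + d := by
      intro y
      have := happ (h y)
      rw [perm_inv_apply_self, hc1, one_mul] at this
      exact this
    have hd : d = h b - h 0 := by
      have := key 0
      rw [add_zero] at this
      rw [this]; ring
    rw [key y, hd]
  -- step 2 : normalize h to fix 0
  set h0 : Equiv.Perm F27 := Equiv.addLeft (-(h 0)) * h with hh0
  have h0app : ∀ x, h0 x = -(h 0) + h x := fun x => rfl
  have h00 : h0 0 = 0 := by rw [h0app]; ring
  have h0add : ∀ x y, h0 (x + y) = h0 x + h0 y := by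
    intro x y
    rw [h0app, h0app, h0app, hadd x y]
    ring
  -- h0 is also in the normalizer
  have h0n : ∀ g : Equiv.Perm F27, g ∈ G ↔ h0 * g * h0⁻¹ ∈ G := by
    have hmem : (Equiv.addLeft (-(h 0)) : Equiv.Perm F27) ∈ Subgroup.normalizer (G : Set (Equiv.Perm F27)) :=
      Subgroup.le_normalizer (htrans _)
    rw [Subgroup.mem_normalizer_iff] at hmem
    intro g
    rw [hh0]
    constructor
    · intro hg
      have h1 := (hmem _).mp ((hn g).mp hg)
      rw [mul_inv_rev]
      simpa only [mul_assoc, SetLike.mem_coe] using h1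
    · intro hg
      rw [mul_inv_rev] at hg
      have : Equiv.addLeft (-(h 0)) * (h * g * h⁻¹) * (Equiv.addLeft (-(h 0)))⁻¹ ∈ G := by
        simpa only [mul_assoc, SetLike.mem_coe] using hg
      exact (hn g).mpr ((hmem _).mpr this)
  -- multiplicativity data for squares
  set u : F27 := h0 1 with hu
  have hu0 : u ≠ 0 := by
    intro hu0
    have : (1 : F27) = 0 := h0.injective (by rw [← hu, hu0, h00])
    exact one_ne_zero this
  have hmul : ∀ c : F27, IsNonzeroSquare c → ∀ y : F27, u * h0 (c * y) = h0 c * h0 y := by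
    intro c hc y
    have hmc : (Equiv.mulLeft₀ c hc.1 : Equiv.Perm F27) ∈ G := by
      rw [memG]
      exact ⟨c, 0, hc, fun x => by simp⟩
    obtain ⟨a', b', ha'sq, ha'⟩ := (memG _).mp ((h0n _).mp hmc)
    have happ : ∀ x, h0 (c * h0⁻¹ x) = a' * x + b' := by
      intro x
      have := ha' x
      simpa using this
    have hb' : b' = 0 := by
      have := happ 0
      rw [show h0⁻¹ 0 = 0 from h0.injective (by rw [perm_apply_inv_self, h00]), mul_zero, h00, mul_zero, zero_add] at this
      exact this.symm
    have key : ∀ y, h0 (c * y) = a' * h0 y := by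
      intro y
      have := happ (h0 y)
      rw [perm_inv_apply_self, hb', add_zero] at this
      exact this
    have hc1 : h0 c = a' * u := by
      have := key 1
      rwa [mul_one] at this
    rw [key y, hc1]
    ring
  -- define f and show it is multiplicative everywhere
  set f : F27 → F27 := fun x => u⁻¹ * h0 x with hf
  have hfadd : ∀ x y, f (x + y) = f x + f y := by
    intro x y
    rw [hf]
    simp only []
    rw [h0add]
    ring
  have hfmul_sq : ∀ c : F27, IsNonzeroSquare c → ∀ y, f (c * y) = f c * f y := by
    intro c hc y
    simp only [hf]
    have := hmul c hc y
    field_simp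
    linear_combination this
  have hR : ∀ c y : F27, f (c * y) = f c * f y := by
    set R : Subring F27 :=
      { carrier := {c | ∀ y, f (c * y) = f c * f y}
        zero_mem' := by
          intro y
          have : f 0 = 0 := by
            have := hfadd 0 0
            rw [add_zero] at this
            linear_combination -this
          rw [zero_mul, this, zero_mul]
        one_mem' := by
          intro y
          have hf1 : f 1 = 1 := by
            rw [hf]; simp only []; rw [← hu, inv_mul_cancel₀ hu0]
          rw [one_mul, hf1, one_mul]
        add_mem' := by
          intro s t hs ht y
          rw [show (s + t) * y = s * y + t * y by ring, hfadd, hs, ht, hfadd]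
          ring
        neg_mem' := by
          intro s hs y
          have hneg : ∀ z, f (-z) = - f z := by
            intro z
            have h1 := hfadd z (-z)
            rw [show z + -z = (0:F27) by ring] at h1
            have : f 0 = 0 := by
              have := hfadd 0 0
              rw [add_zero] at this
              linear_combination -this
            rw [this] at h1
            linear_combination -h1
          rw [show (-s) * y = -(s * y) by ring, hneg, hs, hneg]
          ring
        mul_mem' := by
          intro s t hs ht y
          rw [show s * t * y = s * (t * y) by ring, hs, ht, hs]
          ring }
    obtain ⟨α, hα⟩ := exists_gen
    have hαsq : IsNonzeroSquare ((α : F27) ^ 2) := ⟨pow_ne_zero _ α.ne_zero, (α : F27), rfl⟩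
    have horder : ∀ m : ℕ, 0 < m → m < 26 → (α : F27) ^ m ≠ 1 := by
      intro m hm0 hm26 hm
      have : α ^ m = 1 := Units.ext (by rw [Units.val_pow_eq_pow_val, Units.val_one]; exact hm)
      have := orderOf_dvd_of_pow_eq_one this
      rw [hα] at this
      have := Nat.le_of_dvd hm0 this
      omega
    have hmemR : ∀ c : F27, IsNonzeroSquare c → c ∈ R := fun c hc => hfmul_sq c hc
    have := subring_eq_top R ((α : F27) ^ 2) (hmemR _ hαsq)
      (pow_ne_zero _ α.ne_zero)
      (horder 2 (by norm_num) (by norm_num))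
      (by
        intro hm
        have : (α : F27) ^ 4 = 1 := by rw [show (4:ℕ) = 2*2 by norm_num, pow_mul, hm]; ring
        exact horder 4 (by norm_num) (by norm_num) this)
    exact fun c y => this c y
  -- f is a ring hom
  have hf0 : f 0 = 0 := by
    have := hfadd 0 0
    rw [add_zero] at this
    linear_combination -this
  have hf1 : f 1 = 1 := by
    rw [hf]; simp only []; rw [← hu, inv_mul_cancel₀ hu0]
  set F : F27 →+* F27 :=
    { toFun := f, map_one' := hf1, map_mul' := fun x y => hR x y,
      map_zero' := hf0, map_add' := hfadd } with hF
  obtain ⟨k, hk, hFk⟩ := ringhom_classify F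
  refine ⟨u, h 0, hu0, k, hk, fun x => ?_⟩
  have hfx : f x = x ^ 3 ^ k := hFk x
  have : h0 x = u * x ^ 3 ^ k := by
    rw [← hfx, hf]
    field_simp
  have hhx : h x = h 0 + h0 x := by rw [h0app]; ring
  rw [hhx, this]
  ring

lemma forward_dir (G : Subgroup (Equiv.Perm F27))
    (hG : (G : Set (Equiv.Perm F27)) = affineSet)
    (h : Equiv.Perm F27) (hs : SemiForm h) : h ∈ Subgroup.normalizer (G : Set (Equiv.Perm F27)) := by
  rw [Subgroup.mem_normalizer_iff]
  have memG : ∀ g : Equiv.Perm F27, g ∈ G ↔ g ∈ affineSet := fun g => by rw [← hG]; rfl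
  intro g
  rw [memG, memG]
  constructor
  · exact fun hg => conj_mem hs hg
  · intro hg
    have := conj_mem (semiForm_inv hs) hg
    have heq : h⁻¹ * (h * g * h⁻¹) * h⁻¹⁻¹ = g := by group
    rwa [heq] at this

lemma pow_ne_gen {α : F27ˣ} (hα : orderOf α = 26) {m n : ℕ} (hmn : m < n) (h9 : n ≤ 9) :
    (α : F27) ^ n ≠ (α : F27) ^ m := by
  intro h
  have hu : α ^ n = α ^ m := Units.ext (by
    rw [Units.val_pow_eq_pow_val, Units.val_pow_eq_pow_val]; exact h)
  have h1 : α ^ (n - m) = 1 := by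
    have h2 : α ^ (n - m) * α ^ m = 1 * α ^ m := by
      rw [← pow_add, Nat.sub_add_cancel hmn.le, hu, one_mul]
    exact mul_right_cancel h2
  have := orderOf_dvd_of_pow_eq_one h1
  rw [hα] at this
  have := Nat.le_of_dvd (by omega) this
  omega

lemma semi_bij (a : F27) (ha : a ≠ 0) (b : F27) (k : ℕ) (hk : k ≤ 2) :
    Function.Bijective (fun x : F27 => a * x ^ 3 ^ k + b) := by
  rw [← Finite.injective_iff_bijective]
  intro x y hxy
  simp only [] at hxy
  have hp : x ^ 3 ^ k = y ^ 3 ^ k := by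
    have := add_right_cancel hxy
    exact mul_left_cancel₀ ha this
  calc x = (x ^ 3 ^ k) ^ 3 ^ (3 - k) := (pow_cancel (by omega) x).symm
  _ = (y ^ 3 ^ k) ^ 3 ^ (3 - k) := by rw [hp]
  _ = y := pow_cancel (by omega) y

lemma normalizer_card (G : Subgroup (Equiv.Perm F27))
    (hG : (G : Set (Equiv.Perm F27)) = affineSet) : Nat.card (Subgroup.normalizer (G : Set (Equiv.Perm F27))) = 2106 := by
  obtain ⟨α, hα⟩ := exists_gen
  set Φ : F27ˣ × F27 × Fin 3 → Subgroup.normalizer (G : Set (Equiv.Perm F27)) := fun t =>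
    ⟨Equiv.ofBijective _ (semi_bij (t.1 : F27) t.1.ne_zero t.2.1 (t.2.2 : ℕ) (by omega)),
      forward_dir G hG _ ⟨(t.1 : F27), t.2.1, t.1.ne_zero, (t.2.2 : ℕ), by omega, fun x => rfl⟩⟩
    with hΦ
  have happ : ∀ t x, (Φ t : Equiv.Perm F27) x = (t.1 : F27) * x ^ 3 ^ (t.2.2 : ℕ) + t.2.1 :=
    fun t x => rfl
  have hbij : Function.Bijective Φ := by
    constructor
    · rintro ⟨a, b, k⟩ ⟨a', b', k'⟩ heq
      have hx : ∀ x : F27, (a : F27) * x ^ 3 ^ (k:ℕ) + b = (a' : F27) * x ^ 3 ^ (k':ℕ) + b' := by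
        intro x
        rw [← happ ⟨a,b,k⟩ x, ← happ ⟨a',b',k'⟩ x, Subtype.ext_iff.mp heq]
      have hb : b = b' := by
        have := hx 0
        rw [zero_pow (by positivity), zero_pow (by positivity), mul_zero, mul_zero,
          zero_add, zero_add] at this
        exact this
      have ha : a = a' := by
        have := hx 1
        rw [one_pow, one_pow, mul_one, mul_one, hb] at this
        exact Units.ext (add_right_cancel this)
      have hk : k = k' := by
        have := hx (α : F27)
        rw [hb, ha] at this
        have hpow : (α : F27) ^ 3 ^ (k:ℕ) = (α : F27) ^ 3 ^ (k':ℕ) :=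
          mul_left_cancel₀ a'.ne_zero (add_right_cancel this)
        have h9 : ∀ j : Fin 3, (3:ℕ) ^ (j:ℕ) ≤ 9 := by decide
        by_contra hne
        have hne' : (k:ℕ) ≠ (k':ℕ) := fun hh => hne (Fin.ext hh)
        rcases Nat.lt_or_ge (k:ℕ) (k':ℕ) with hlt | hge
        · exact pow_ne_gen hα (Nat.pow_lt_pow_right (by norm_num) hlt)
            (h9 k') hpow.symm
        · have hlt : (k':ℕ) < (k:ℕ) := by omega
          exact pow_ne_gen hα (Nat.pow_lt_pow_right (by norm_num) hlt)
            (h9 k) hpow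
      rw [Prod.ext_iff, Prod.ext_iff]
      exact ⟨ha, hb, hk⟩
    · rintro ⟨y, hy⟩
      obtain ⟨a, b, hane, k, hk, hform⟩ := reverse_dir G hG y hy
      refine ⟨⟨Units.mk0 a hane, b, ⟨k, by omega⟩⟩, ?_⟩
      apply Subtype.ext
      apply Equiv.ext
      intro x
      rw [happ, hform]
      rfl
  have := Nat.card_eq_of_bijective Φ hbij
  rw [← this, Nat.card_prod, Nat.card_prod, cardU, cardF, Nat.card_eq_fintype_card,
    Fintype.card_fin]

/-- A permutation of `F₂₇` belongs to the normalizer of `G₃₅₁` in `Equiv.Perm F₂₇` if and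
only if it has the form `x ↦ a·x^(3^k) + b` with `a ≠ 0`, `b ∈ F₂₇` and `k ∈ {0, 1, 2}`;
consequently the normalizer has order 2106. -/
theorem statement9 (G : Subgroup (Equiv.Perm F27))
    (hG : (G : Set (Equiv.Perm F27)) = affineSet) :
    (∀ h : Equiv.Perm F27, h ∈ Subgroup.normalizer (G : Set (Equiv.Perm F27)) ↔
      ∃ a b : F27, a ≠ 0 ∧ ∃ k : ℕ, k ≤ 2 ∧ ∀ x : F27, h x = a * x ^ (3 ^ k) + b) ∧
    Nat.card (Subgroup.normalizer (G : Set (Equiv.Perm F27))) = 2106 := by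
  exact ⟨fun h => ⟨fun hn => reverse_dir G hG h hn, fun hs => forward_dir G hG h hs⟩,
    normalizer_card G hG⟩
end
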